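/- Let p be a prime, and let f = g/h be a rational function with coefficients in ℚ_p, where h is a polynomial all of whose roots in the algebraic closure of ℚ_p have absolute value strictly greater than r > 0, and h(0) ≠ 0. Then the coefficients a_k of the formal power series expansion of 1/h at 0 satisfy |a_k|_p ≤ |a_0|_p / R^k, where R > r is the minimum absolute value of a root of h. In particular the power series of 1/h converges on the ball {x ∈ ℚ_p : |x|_p ≤ r}. -/

import Mathlib

open Multiset in
lemma aux_norm_msum_le {K : Type*} [NormedField K] [IsUltrametricDist K]
    {s : Multiset K} {C : ℝ} (hC : 0 ≤ C) (hs : ∀ x ∈ s, ‖x‖ ≤ C) : ‖s.sum‖ ≤ C := by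
  induction s using Multiset.induction with
  | empty => simpa using hC
  | cons a s ih =>
    rw [Multiset.sum_cons]
    exact (IsUltrametricDist.norm_add_le_max _ _).trans
      (max_le (hs a (mem_cons_self a s)) (ih fun x hx => hs x (mem_cons_of_mem hx)))

lemma aux_norm_mprod {K : Type*} [NormedField K] (s : Multiset K) :
    ‖s.prod‖ = (s.map (fun x => ‖x‖)).prod := by
  induction s using Multiset.induction with
  | empty => simp
  | cons a s ih => simp [norm_mul, ih]

lemma aux_pow_card_le_prod {s : Multiset ℝ} {R : ℝ} (hR : 0 ≤ R) (h : ∀ x ∈ s, R ≤ x) :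
    R ^ Multiset.card s ≤ s.prod := by
  induction s using Multiset.induction with
  | empty => simp
  | cons a s ih =>
    simp only [Multiset.card_cons, Multiset.prod_cons, pow_succ]
    rw [mul_comm]
    exact mul_le_mul (h a (Multiset.mem_cons_self a s))
      (ih fun x hx => h x (Multiset.mem_cons_of_mem hx)) (pow_nonneg hR _)
      (hR.trans (h a (Multiset.mem_cons_self a s)))

open Polynomial in
lemma aux_coeff_bound (p : ℕ) [Fact p.Prime] (K : Type*) [NormedField K] [Algebra ℚ_[p] K]
    [IsAlgClosed K] (hK : ∀ a : ℚ_[p], ‖algebraMap ℚ_[p] K a‖ = ‖a‖)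
    (h : Polynomial ℚ_[p]) (h0 : h.coeff 0 ≠ 0) (R : ℝ) (hR : 0 < R)
    (hroots : ∀ z : K, (Polynomial.aeval z) h = 0 → R ≤ ‖z‖) (i : ℕ) :
    ‖h.coeff i‖ * R ^ i ≤ ‖h.coeff 0‖ := by
  classical
  haveI : IsUltrametricDist K := by
    apply IsUltrametricDist.isUltrametricDist_of_forall_norm_natCast_le_one
    intro n
    rw [← map_natCast (algebraMap ℚ_[p] K), hK]
    exact_mod_cast Padic.norm_int_le_one (n : ℤ)
  set f := algebraMap ℚ_[p] K with hf
  set q := h.map f with hqdef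
  have hne : h ≠ 0 := fun hh => h0 (by simp [hh])
  have hq0 : q ≠ 0 := Polynomial.map_ne_zero hne
  have hsplit : q.Splits :=
    IsAlgClosed.splits q
  have hcard : Multiset.card q.roots = q.natDegree := (Polynomial.splits_iff_card_roots).1 hsplit
  have hzR : ∀ z ∈ q.roots, R ≤ ‖z‖ := by
    intro z hz
    apply hroots z
    have := (Polynomial.mem_roots hq0).1 hz
    rwa [Polynomial.IsRoot, hqdef, Polynomial.eval_map, ← Polynomial.aeval_def] at this
  set P := (q.roots.map fun z => ‖z‖).prod with hPdef
  have hPnn : 0 ≤ P := Multiset.prod_nonneg (by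
    intro x hx
    obtain ⟨z, _, rfl⟩ := Multiset.mem_map.1 hx
    exact norm_nonneg z)
  have hcoe : ∀ j, ‖h.coeff j‖ = ‖q.coeff j‖ := by
    intro j; rw [hqdef, Polynomial.coeff_map, hK]
  have hc0 : ‖q.coeff 0‖ = ‖q.leadingCoeff‖ * P := by
    conv_lhs => rw [← Polynomial.C_leadingCoeff_mul_prod_multiset_X_sub_C hcard]
    rw [Polynomial.coeff_zero_eq_eval_zero, Polynomial.eval_mul, Polynomial.eval_C,
      Polynomial.eval_multiset_prod, norm_mul, Multiset.map_map, aux_norm_mprod,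
      Multiset.map_map]
    congr 2
    apply Multiset.map_congr rfl
    intro z _
    simp
  rw [hcoe, hcoe]
  rcases le_or_gt i q.natDegree with hi | hi
  · rw [Polynomial.coeff_eq_esymm_roots_of_card hcard hi]
    have hesymm : ‖q.roots.esymm (q.natDegree - i)‖ ≤ P / R ^ i := by
      apply aux_norm_msum_le (div_nonneg hPnn (pow_pos hR i).le)
      intro x hx
      obtain ⟨t, ht, rfl⟩ := Multiset.mem_map.1 hx
      obtain ⟨htle, htcard⟩ := (Multiset.mem_powersetCard).1 ht
      rw [le_div_iff₀ (pow_pos hR i), aux_norm_mprod]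
      have hsplit2 : P = ((q.roots - t).map fun z => ‖z‖).prod * ((t.map fun z => ‖z‖)).prod := by
        rw [hPdef, ← Multiset.prod_add, ← Multiset.map_add, tsub_add_cancel_of_le htle]
      have hcardsub : Multiset.card (q.roots - t) = i := by
        rw [Multiset.card_sub htle, htcard, hcard]
        omega
      have hRle : R ^ i ≤ ((q.roots - t).map fun z => ‖z‖).prod := by
        have := aux_pow_card_le_prod (s := (q.roots - t).map fun z => ‖z‖) hR.le ?_
        · rwa [Multiset.card_map, hcardsub] at this
        · intro x hx
          obtain ⟨z, hz, rfl⟩ := Multiset.mem_map.1 hx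
          exact hzR z (Multiset.mem_of_le (Multiset.sub_le_self _ _) hz)
      calc (t.map fun z => ‖z‖).prod * R ^ i
          ≤ (t.map fun z => ‖z‖).prod * ((q.roots - t).map fun z => ‖z‖).prod := by
            apply mul_le_mul_of_nonneg_left hRle
            exact Multiset.prod_nonneg (by
              intro x hx
              obtain ⟨z, _, rfl⟩ := Multiset.mem_map.1 hx
              exact norm_nonneg z)
        _ = P := by rw [hsplit2, mul_comm]
    calc ‖q.leadingCoeff * (-1) ^ (q.natDegree - i) * q.roots.esymm (q.natDegree - i)‖ * R ^ i
        = ‖q.leadingCoeff‖ * ‖q.roots.esymm (q.natDegree - i)‖ * R ^ i := by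
          rw [norm_mul, norm_mul, norm_pow, norm_neg, norm_one, one_pow, mul_one]
      _ ≤ ‖q.leadingCoeff‖ * (P / R ^ i) * R ^ i := by
          apply mul_le_mul_of_nonneg_right _ (pow_pos hR i).le
          exact mul_le_mul_of_nonneg_left hesymm (norm_nonneg _)
      _ = ‖q.leadingCoeff‖ * P := by
          field_simp
      _ = ‖q.coeff 0‖ := hc0.symm
  · rw [Polynomial.coeff_eq_zero_of_natDegree_lt hi]
    simp only [norm_zero, zero_mul]
    exact norm_nonneg _


/-- If all roots (in a normed algebraically closed extension of `ℚ_p`) of a polynomial `h`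
with `h 0 ≠ 0` have absolute value at least `R > r > 0`, then the coefficients `a k` of the
power series expansion of `1/h` at `0` satisfy `‖a k‖ ≤ ‖a 0‖ / R ^ k`, and the power series
of `1/h` converges on the closed ball of radius `r`. -/
theorem padic_inv_poly_series_converges (p : ℕ) [hp : Fact p.Prime]
    (K : Type*) [NormedField K] [Algebra ℚ_[p] K] [IsAlgClosed K]
    (hK : ∀ a : ℚ_[p], ‖algebraMap ℚ_[p] K a‖ = ‖a‖)
    (h : Polynomial ℚ_[p]) (h0 : h.coeff 0 ≠ 0)
    (r R : ℝ) (hr : 0 < r) (hrR : r < R)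
    (hroots : ∀ z : K, (Polynomial.aeval z) h = 0 → R ≤ ‖z‖)
    (a : ℕ → ℚ_[p])
    (ha : ∀ k : ℕ, a k = PowerSeries.coeff (R := ℚ_[p]) k (↑h : PowerSeries ℚ_[p])⁻¹) :
    (∀ k : ℕ, ‖a k‖ ≤ ‖a 0‖ / R ^ k) ∧
      ∀ x : ℚ_[p], ‖x‖ ≤ r → Summable (fun k : ℕ => a k * x ^ k) := by
  have hR : (0:ℝ) < R := hr.trans hrR
  have hcc : PowerSeries.constantCoeff (R := ℚ_[p]) (↑h : PowerSeries ℚ_[p]) = h.coeff 0 := by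
    rw [← PowerSeries.coeff_zero_eq_constantCoeff_apply, Polynomial.coeff_coe]
  have hb : ∀ i, ‖h.coeff i‖ ≤ ‖h.coeff 0‖ / R ^ i := by
    intro i
    rw [le_div_iff₀ (pow_pos hR i)]
    exact aux_coeff_bound p K hK h h0 R hR hroots i
  have ha0 : a 0 = (h.coeff 0)⁻¹ := by
    rw [ha 0, PowerSeries.coeff_inv, if_pos rfl, hcc]
  -- key bound
  have key : ∀ k, ‖a k‖ ≤ ‖a 0‖ / R ^ k := by
    intro k
    induction k using Nat.strong_induction_on with
    | _ k ih =>
      rcases Nat.eq_zero_or_pos k with rfl | hk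
      · simp
      · rw [ha k, PowerSeries.coeff_inv, if_neg hk.ne', hcc]
        rw [norm_mul, norm_neg, norm_inv]
        rw [le_div_iff₀ (pow_pos hR k)]
        have hsum : ‖∑ x ∈ Finset.HasAntidiagonal.antidiagonal k,
            if x.2 < k then (PowerSeries.coeff (R := ℚ_[p]) x.1 (↑h : PowerSeries ℚ_[p])) *
              (PowerSeries.coeff (R := ℚ_[p]) x.2 (↑h : PowerSeries ℚ_[p])⁻¹) else 0‖
            ≤ ‖h.coeff 0‖ * ‖a 0‖ / R ^ k := by
          apply IsUltrametricDist.norm_sum_le_of_forall_le_of_nonneg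
          · positivity
          · intro x hx
            rcases Finset.HasAntidiagonal.mem_antidiagonal.1 hx with hxk
            split_ifs with hx2
            · rw [norm_mul, Polynomial.coeff_coe, ← ha x.2]
              have h1 : ‖h.coeff x.1‖ ≤ ‖h.coeff 0‖ / R ^ x.1 := hb x.1
              have h2 : ‖a x.2‖ ≤ ‖a 0‖ / R ^ x.2 := ih x.2 (by omega)
              calc ‖h.coeff x.1‖ * ‖a x.2‖
                  ≤ (‖h.coeff 0‖ / R ^ x.1) * (‖a 0‖ / R ^ x.2) := by
                    exact mul_le_mul h1 h2 (norm_nonneg _) (by positivity)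
                _ = ‖h.coeff 0‖ * ‖a 0‖ / R ^ k := by
                    rw [← hxk, pow_add]; field_simp
            · simp only [norm_zero]; positivity
        have hb0 : ‖h.coeff 0‖ ≠ 0 := norm_ne_zero_iff.2 h0
        calc ‖h.coeff 0‖⁻¹ * ‖_‖ * R ^ k
            ≤ ‖h.coeff 0‖⁻¹ * (‖h.coeff 0‖ * ‖a 0‖ / R ^ k) * R ^ k :=
              mul_le_mul_of_nonneg_right
                (mul_le_mul_of_nonneg_left hsum (by positivity)) (by positivity)
          _ = ‖a 0‖ := by
              rw [ha0, norm_inv]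
              field_simp
  refine ⟨key, fun x hx => ?_⟩
  apply Summable.of_norm_bounded (g := fun k => ‖a 0‖ * (r / R) ^ k)
  · exact (summable_geometric_of_lt_one (by positivity)
      (by rw [div_lt_one hR]; exact hrR)).mul_left _
  · intro k
    rw [norm_mul, norm_pow]
    calc ‖a k‖ * ‖x‖ ^ k ≤ (‖a 0‖ / R ^ k) * r ^ k := by
          apply mul_le_mul (key k) (pow_le_pow_left₀ (norm_nonneg _) hx k) (by positivity) (by positivity)
      _ = ‖a 0‖ * (r / R) ^ k := by
          rw [div_pow]; field_simp
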